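/- Let K = ℓ²(ℕ) (indexed from n = 1) and let H = (K ⊕ K) ⊕ (K ⊕ K). Let G₁ = {((x, u), (y, v)) ∈ H : y_n = n² x_n and v_n = u_n/n² for all n} and G₂ = {((x, u), (y, v)) ∈ H : y_n = n³ x_n and v_n = u_n/n³ for all n}; these are closed subspaces of H (the graphs of the closed operators A ⊕ C and B ⊕ D, where A, B, C, D are the diagonal operators with diagonals (n²)_n, (n³)_n, (1/n²)_n, (1/n³)_n respectively). Then the systems (H; (K ⊕ K) ⊕ 0, G₁) and (H; (K ⊕ K) ⊕ 0, G₂) are not boundedly isomorphic. -/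

import Mathlib

set_option maxHeartbeats 1000000

open scoped ENNReal


/- STATEMENT 16: On K = ℓ²(ℕ) (indexed from 1) and H = (K ⊕ K) ⊕ (K ⊕ K), let
G₁ = {((x,u),(y,v)) : yₙ = n² xₙ, vₙ = uₙ/n²} (the graph of A ⊕ C) and
G₂ = {((x,u),(y,v)) : yₙ = n³ xₙ, vₙ = uₙ/n³} (the graph of B ⊕ D). Then
(H; (K ⊕ K) ⊕ 0, G₁) and (H; (K ⊕ K) ⊕ 0, G₂) are not boundedly isomorphic.
(Indexing: Lean's n : ℕ corresponds to the paper's n + 1.) -/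

noncomputable section

abbrev K : Type := lp (fun _ : ℕ => ℂ) 2

/-- The graph of the direct sum of the diagonal operators with diagonals `a` and `b`,
as a subspace of (K × K) × (K × K). -/
def sumDiagGraph (a b : ℕ → ℂ) : Submodule ℂ ((K × K) × (K × K)) where
  carrier := {p | (∀ n, p.2.1 n = a n * p.1.1 n) ∧ (∀ n, p.2.2 n = b n * p.1.2 n)}
  add_mem' := by
    rintro p q ⟨hp1, hp2⟩ ⟨hq1, hq2⟩
    refine ⟨fun n => ?_, fun n => ?_⟩ <;>
      · simp only [Prod.snd_add, Prod.fst_add, lp.coeFn_add, Pi.add_apply,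
          hp1 n, hp2 n, hq1 n, hq2 n]
        ring
  zero_mem' := ⟨fun n => by simp [lp.coeFn_zero], fun n => by simp [lp.coeFn_zero]⟩
  smul_mem' := by
    rintro c p ⟨hp1, hp2⟩
    refine ⟨fun n => ?_, fun n => ?_⟩ <;>
      · simp only [Prod.smul_snd, Prod.smul_fst, lp.coeFn_smul, Pi.smul_apply,
          hp1 n, hp2 n, smul_eq_mul]
        ring

lemma memℓp_dom {f : ℕ → ℂ} (g : K) (t : ℝ) (ht : 0 ≤ t) (h : ∀ n, ‖f n‖ ≤ t * ‖g n‖) :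
    Memℓp f 2 := by
  apply memℓp_gen
  have hg : Summable fun n => ‖g n‖ ^ (2:ℝ≥0∞).toReal := (lp.memℓp g).summable (by norm_num)
  refine Summable.of_nonneg_of_le (fun n => by positivity) (fun n => ?_)
    (hg.mul_left (t ^ (2:ℝ≥0∞).toReal))
  calc ‖f n‖ ^ (2:ℝ≥0∞).toReal ≤ (t * ‖g n‖) ^ (2:ℝ≥0∞).toReal :=
        Real.rpow_le_rpow (norm_nonneg _) (h n) (by norm_num)
  _ = _ := Real.mul_rpow ht (norm_nonneg _)

lemma norm_le_dom (f g : K) (t : ℝ) (ht : 0 ≤ t) (h : ∀ n, ‖f n‖ ≤ t * ‖g n‖) :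
    ‖f‖ ≤ t * ‖g‖ := by
  have h2 : (0:ℝ) < (2 : ℝ≥0∞).toReal := by norm_num
  have key : ‖f‖ ^ (2:ℝ≥0∞).toReal ≤ (t * ‖g‖) ^ (2:ℝ≥0∞).toReal := by
    rw [lp.norm_rpow_eq_tsum h2 f, Real.mul_rpow ht (norm_nonneg g),
      lp.norm_rpow_eq_tsum h2 g, ← tsum_mul_left]
    refine Summable.tsum_le_tsum (fun n => ?_) ((lp.memℓp f).summable h2)
      (((lp.memℓp g).summable h2).mul_left _)
    calc ‖f n‖ ^ (2:ℝ≥0∞).toReal ≤ (t * ‖g n‖) ^ (2:ℝ≥0∞).toReal :=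
          Real.rpow_le_rpow (norm_nonneg _) (h n) h2.le
    _ = _ := Real.mul_rpow ht (norm_nonneg _)
  exact (Real.rpow_le_rpow_iff (norm_nonneg f) (by positivity) h2).1 key

/-- diagonal multiplication operator with contractive diagonal -/
def diagL (d : ℕ → ℂ) (hd : ∀ n, ‖d n‖ ≤ 1) : K →L[ℂ] K := by
  refine LinearMap.mkContinuous
    { toFun := fun f => ⟨fun n => d n * f n, memℓp_dom f 1 zero_le_one (fun n => by
          calc ‖d n * f n‖ = ‖d n‖ * ‖f n‖ := norm_mul _ _
        _ ≤ 1 * ‖f n‖ := mul_le_mul_of_nonneg_right (hd n) (norm_nonneg _))⟩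
      map_add' := fun f g => by
        ext n
        simp only [lp.coeFn_add, Pi.add_apply]
        change d n * (f n + g n) = d n * f n + d n * g n
        ring
      map_smul' := fun c f => by
        ext n
        simp only [lp.coeFn_smul, Pi.smul_apply, RingHom.id_apply, smul_eq_mul]
        change d n * (c * f n) = c * (d n * f n)
        ring }
    1 (fun f => by
      simp only [LinearMap.coe_mk, AddHom.coe_mk]
      refine le_trans (norm_le_dom _ f 1 zero_le_one (fun n => ?_)) (by simp)
      calc ‖d n * f n‖ = ‖d n‖ * ‖f n‖ := norm_mul _ _
      _ ≤ 1 * ‖f n‖ := mul_le_mul_of_nonneg_right (hd n) (norm_nonneg _))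

@[simp] lemma diagL_apply (d : ℕ → ℂ) (hd : ∀ n, ‖d n‖ ≤ 1) (f : K) (n : ℕ) :
    (diagL d hd f) n = d n * f n := rfl

/-- constructor for elements of K -/
def mkK (f : ℕ → ℂ) (hf : Memℓp f 2) : K := ⟨f, hf⟩

@[simp] lemma mkK_apply (f : ℕ → ℂ) (hf : Memℓp f 2) (n : ℕ) : (mkK f hf) n = f n := rfl

def ce (e : ℕ) : ℕ → ℂ := fun n => 1 / ((n : ℂ) + 1) ^ e

lemma cast_succ (n : ℕ) : ((n : ℂ) + 1) = ((n + 1 : ℕ) : ℂ) := by push_cast; ring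

lemma ce_norm (e n : ℕ) : ‖ce e n‖ = (((n : ℝ) + 1) ^ e)⁻¹ := by
  unfold ce
  rw [cast_succ, norm_div, norm_pow, norm_one, Complex.norm_natCast]
  push_cast
  rw [one_div]

lemma hce (e : ℕ) : ∀ n, ‖ce e n‖ ≤ 1 := by
  intro n
  rw [ce_norm, inv_le_one_iff₀]
  right
  refine one_le_pow₀ ?_
  have : (0:ℝ) ≤ (n:ℝ) := Nat.cast_nonneg n
  linarith

lemma ce_base_ne (e n : ℕ) : ((n : ℂ) + 1) ^ e ≠ 0 := by
  rw [cast_succ]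
  exact pow_ne_zero _ (Nat.cast_ne_zero.2 (Nat.succ_ne_zero n))

def diagE (e : ℕ) : K →L[ℂ] K := diagL (ce e) (hce e)

@[simp] lemma diagE_apply (e : ℕ) (f : K) (n : ℕ) :
    (diagE e f) n = f n / ((n : ℂ) + 1) ^ e := by
  have : (diagE e f) n = ce e n * f n := rfl
  rw [this]
  unfold ce
  ring

def RE (e : ℕ) : Set K := {v | Memℓp (fun n : ℕ => ((n : ℂ) + 1) ^ e * (v : ℕ → ℂ) n) 2}

lemma mem_RE_iff (e : ℕ) (v : K) : v ∈ RE e ↔ ∃ u : K, diagE e u = v := by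
  constructor
  · intro hv
    have hv' : Memℓp (fun n : ℕ => ((n : ℂ) + 1) ^ e * (v : ℕ → ℂ) n) 2 := hv
    refine ⟨mkK _ hv', ?_⟩
    ext n
    rw [diagE_apply, mkK_apply]
    rw [mul_comm]
    exact mul_div_cancel_right₀ _ (ce_base_ne e n)
  · rintro ⟨u, rfl⟩
    have he : (fun n : ℕ => ((n : ℂ) + 1) ^ e * ((diagE e u : K) : ℕ → ℂ) n)
        = fun n : ℕ => (u : ℕ → ℂ) n := by
      funext n
      rw [diagE_apply, mul_div_assoc']
      rw [mul_comm]
      exact mul_div_cancel_right₀ _ (ce_base_ne e n)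
    show Memℓp _ 2
    rw [he]
    exact lp.memℓp u

lemma diagE_inj (e : ℕ) : Function.Injective (diagE e) := by
  intro u v h
  ext n
  have h' : (diagE e u) n = (diagE e v) n := by rw [h]
  rw [diagE_apply, diagE_apply] at h'
  have := ce_base_ne e n
  field_simp at h'
  exact h'

abbrev MK : Type := K × K

def A1 : MK →L[ℂ] MK :=
  (ContinuousLinearMap.fst ℂ K K).prod ((diagE 2).comp (ContinuousLinearMap.snd ℂ K K))

def B1 : MK →L[ℂ] MK :=
  (ContinuousLinearMap.fst ℂ K K).prod ((diagE 3).comp (ContinuousLinearMap.snd ℂ K K))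

@[simp] lemma A1_apply (p : MK) : A1 p = (p.1, diagE 2 p.2) := rfl
@[simp] lemma B1_apply (p : MK) : B1 p = (p.1, diagE 3 p.2) := rfl

lemma A1_inj : Function.Injective A1 := by
  intro p q h
  simp only [A1_apply, Prod.mk.injEq] at h
  exact Prod.ext h.1 (diagE_inj 2 h.2)

lemma B1_inj : Function.Injective B1 := by
  intro p q h
  simp only [B1_apply, Prod.mk.injEq] at h
  exact Prod.ext h.1 (diagE_inj 3 h.2)

lemma memℓp_finsupp (f : ℕ → ℂ) (F : Finset ℕ) (h : ∀ m ∉ F, f m = 0) : Memℓp f 2 := by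
  apply memℓp_gen
  apply summable_of_ne_finset_zero (s := F)
  intro m hm
  rw [h m hm]
  simp only [norm_zero]
  rw [Real.zero_rpow (by norm_num)]

def embF (F : Finset ℕ) : (↥F → ℂ) →ₗ[ℂ] K where
  toFun a := mkK (fun m => if h : m ∈ F then a ⟨m, h⟩ else 0)
    (memℓp_finsupp _ F (fun m hm => by simp [hm]))
  map_add' a b := by
    ext m
    by_cases h : m ∈ F <;> simp [mkK, h, lp.coeFn_add] <;> erw [Pi.add_apply] <;> simp [h]
  map_smul' c a := by
    ext m
    by_cases h : m ∈ F <;> simp [mkK, h, lp.coeFn_smul]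

lemma embF_apply (F : Finset ℕ) (a : ↥F → ℂ) (m : ℕ) :
    (embF F a : ℕ → ℂ) m = if h : m ∈ F then a ⟨m, h⟩ else 0 := rfl

lemma embF_inj (F : Finset ℕ) : Function.Injective (embF F) := by
  intro a b h
  funext m
  have := congrArg (fun f : K => (f : ℕ → ℂ) m.1) h
  simpa [embF_apply, m.2] using this

def Phi (F : Finset ℕ) (N : ℕ) (X : MK →L[ℂ] MK) : (↥F → ℂ) →ₗ[ℂ] (Fin N → ℂ) where
  toFun a := fun j => ((X ((0 : K), embF F a)).2 : ℕ → ℂ) j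
  map_add' a b := by
    funext j
    have h0 : ((0 : K), embF F (a + b)) = ((0 : K), embF F a) + ((0 : K), embF F b) := by
      rw [map_add, Prod.mk_add_mk, add_zero]
    show ((X ((0 : K), embF F (a+b))).2 : ℕ → ℂ) j
      = ((X ((0 : K), embF F a)).2 : ℕ → ℂ) j + ((X ((0 : K), embF F b)).2 : ℕ → ℂ) j
    rw [h0, map_add, Prod.snd_add]
    simp [lp.coeFn_add]
  map_smul' c a := by
    funext j
    have h0 : ((0 : K), embF F (c • a)) = c • ((0 : K), embF F a) := by
      rw [map_smul, Prod.smul_mk, smul_zero]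
    show ((X ((0 : K), embF F (c • a))).2 : ℕ → ℂ) j
      = c • ((X ((0 : K), embF F a)).2 : ℕ → ℂ) j
    rw [h0, map_smul]
    simp [lp.coeFn_smul, Prod.smul_snd]

lemma exists_kernel (F : Finset ℕ) (N : ℕ) (h : N < F.card) (X : MK →L[ℂ] MK) :
    ∃ a : ↥F → ℂ, a ≠ 0 ∧ Phi F N X a = 0 := by
  by_contra hcon
  push_neg at hcon
  have hinj : Function.Injective (Phi F N X) := by
    rw [injective_iff_map_eq_zero]
    intro a ha
    by_contra h0
    exact hcon a h0 ha
  have := LinearMap.finrank_le_finrank_of_injective hinj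
  rw [Module.finrank_pi, Module.finrank_pi] at this
  simp [Fintype.card_coe] at this
  omega

lemma norm_diagE_coord (e : ℕ) (f : K) (m : ℕ) :
    ‖(diagE e f) m‖ = ‖f m‖ / ((m : ℝ) + 1) ^ e := by
  rw [diagE_apply, norm_div]
  congr 1
  rw [cast_succ, norm_pow, Complex.norm_natCast]
  push_cast
  ring

lemma norm_pair_zero_left (v : K) : ‖(((0 : K), v) : MK)‖ = ‖v‖ := by
  rw [Prod.norm_def]
  simp [max_eq_right (norm_nonneg v)]

lemma norm_pair_zero_right (v : K) : ‖((v, (0 : K)) : MK)‖ = ‖v‖ := by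
  rw [Prod.norm_def]
  simp [max_eq_left (norm_nonneg v)]

lemma endgame (X Y S S' : MK →L[ℂ] MK)
    (hBX : ∀ p, B1 (X p) = S (A1 p))
    (hAY : ∀ p, A1 (Y p) = S' (B1 p))
    (hYX : ∀ p, Y (X p) = p) : False := by
  classical
  set c : ℝ := max 1 (max ‖X‖ (max ‖Y‖ (max ‖S‖ ‖S'‖))) with hc
  have hc1 : (1:ℝ) ≤ c := le_max_left _ _
  have hcX : ‖X‖ ≤ c := le_trans (le_max_left _ _) (le_max_right _ _)
  have hcY : ‖Y‖ ≤ c := le_trans (le_trans (le_max_left _ _) (le_max_right _ _)) (le_max_right _ _)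
  have hcS : ‖S‖ ≤ c := le_trans (le_trans (le_trans (le_max_left _ _) (le_max_right _ _))
    (le_max_right _ _)) (le_max_right _ _)
  have hcS' : ‖S'‖ ≤ c := le_trans (le_trans (le_trans (le_max_right _ _) (le_max_right _ _))
    (le_max_right _ _)) (le_max_right _ _)
  have hc0 : (0:ℝ) < c := lt_of_lt_of_le one_pos hc1
  obtain ⟨k, hk⟩ : ∃ k : ℕ, 4 * c ^ 2 ≤ 2 ^ k := by
    obtain ⟨k, hk⟩ := pow_unbounded_of_one_lt (4 * c ^ 2) (one_lt_two (α := ℝ))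
    exact ⟨k, hk.le⟩
  set t : ℕ := k + 2 with ht
  set n : ℕ := 6 * t with hn
  set N : ℕ := 2 ^ (2 * t + k) with hN
  set F : Finset ℕ := Finset.Icc (2 ^ (3 * t) - 1) (2 ^ (3 * t) + 2 ^ (3 * t - 2) - 1) with hF
  have hFcard : F.card = 2 ^ (3 * t - 2) + 1 := by
    rw [hF, Nat.card_Icc]
    have h1 : 1 ≤ 2 ^ (3 * t) := Nat.one_le_two_pow
    have h2 : 1 ≤ 2 ^ (3 * t - 2) := Nat.one_le_two_pow
    generalize hA : 2 ^ (3 * t) = A at *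
    generalize hB : 2 ^ (3 * t - 2) = B at *
    omega
  have hNF : N < F.card := by
    rw [hFcard, hN]
    have h3 : 2 * t + k = 3 * t - 2 := by omega
    rw [h3]
    omega
  -- bounds for members of F
  have hmemF : ∀ m ∈ F, 2 ^ (3 * t) ≤ m + 1 ∧ m + 1 ≤ 2 ^ (3 * t) + 2 ^ (3 * t - 2) := by
    intro m hm
    rw [hF, Finset.mem_Icc] at hm
    have h1 : 1 ≤ 2 ^ (3 * t) := Nat.one_le_two_pow
    obtain ⟨ha, hb⟩ := hm
    have h1' : 1 ≤ 2 ^ (3 * t) + 2 ^ (3 * t - 2) := le_trans h1 (Nat.le_add_right _ _)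
    exact ⟨Nat.sub_le_iff_le_add.mp ha, (Nat.le_sub_iff_add_le h1').mp hb⟩
  have hP1 : ∀ m ∈ F, (2:ℝ) ^ n ≤ ((m : ℝ) + 1) ^ 2 := by
    intro m hm
    obtain ⟨h1, _⟩ := hmemF m hm
    have h1' : (2:ℝ) ^ (3 * t) ≤ (m : ℝ) + 1 := by
      have := (Nat.cast_le (α := ℝ)).2 h1
      push_cast at this
      linarith
    calc (2:ℝ) ^ n = ((2:ℝ) ^ (3 * t)) ^ 2 := by
          rw [← pow_mul]; congr 1; omega
    _ ≤ ((m : ℝ) + 1) ^ 2 := by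
          apply pow_le_pow_left₀ (by positivity) h1'
  have hP2 : ∀ m ∈ F, ((m : ℝ) + 1) ^ 2 ≤ (2:ℝ) ^ (n + 1) := by
    intro m hm
    obtain ⟨_, h2⟩ := hmemF m hm
    set s : ℕ := 3 * t - 2 with hs
    have hts : 3 * t = s + 2 := by omega
    have h2' : (m : ℝ) + 1 ≤ 5 * (2:ℝ) ^ s := by
      have := (Nat.cast_le (α := ℝ)).2 h2
      push_cast at this
      rw [hts] at this
      have e1 : (2:ℝ) ^ (s + 2) = 4 * 2 ^ s := by rw [pow_add]; ring
      rw [e1] at this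
      linarith
    have e2 : (2:ℝ) ^ (n + 1) = 32 * ((2:ℝ) ^ s) ^ 2 := by
      have : n + 1 = 2 * s + 5 := by omega
      rw [this, pow_add, mul_comm 2 s, pow_mul]
      ring
    have hsp : (0:ℝ) ≤ (2:ℝ) ^ s := by positivity
    have hm0 : (0:ℝ) ≤ (m : ℝ) + 1 := by positivity
    calc ((m : ℝ) + 1) ^ 2 ≤ (5 * (2:ℝ) ^ s) ^ 2 := pow_le_pow_left₀ hm0 h2' 2
    _ = 25 * ((2:ℝ) ^ s) ^ 2 := by ring
    _ ≤ 32 * ((2:ℝ) ^ s) ^ 2 := by nlinarith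
    _ = (2:ℝ) ^ (n + 1) := e2.symm
  have hP3 : ∀ m : ℕ, N ≤ m → (2:ℝ) ^ (n + k) ≤ ((m : ℝ) + 1) ^ 3 := by
    intro m hm
    have h1 : (2:ℝ) ^ (2 * t + k) ≤ (m : ℝ) + 1 := by
      have := (Nat.cast_le (α := ℝ)).2 hm
      rw [hN] at this
      push_cast at this
      linarith
    calc (2:ℝ) ^ (n + k) ≤ (2:ℝ) ^ ((2 * t + k) * 3) := by
          apply pow_le_pow_right₀ one_le_two
          omega
    _ = ((2:ℝ) ^ (2 * t + k)) ^ 3 := by rw [pow_mul]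
    _ ≤ ((m : ℝ) + 1) ^ 3 := pow_le_pow_left₀ (by positivity) h1 3
  -- the kernel vector
  obtain ⟨a, ha0, haPhi⟩ := exists_kernel F N hNF X
  set u : K := embF F a with hu
  have hu0 : u ≠ 0 := by
    intro h
    apply ha0
    apply embF_inj F
    rw [← hu, h, map_zero]
  have hU : 0 < ‖u‖ := norm_pos_iff.2 hu0
  have husupp : ∀ m ∉ F, (u : ℕ → ℂ) m = 0 := by
    intro m hm
    rw [hu, embF_apply]
    simp [hm]
  set ξ : MK := ((0 : K), u) with hξ
  set η : MK := X ξ with hη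
  have hηcoord : ∀ m : ℕ, m < N → (η.2 : ℕ → ℂ) m = 0 := by
    intro m hm
    have := congrFun haPhi ⟨m, hm⟩
    exact this
  set ε : ℝ := ((2:ℝ) ^ n)⁻¹ with hε
  have hεpos : 0 < ε := by positivity
  set κ : ℝ := ((2:ℝ) ^ k)⁻¹ with hκ
  have hκpos : 0 < κ := by positivity
  -- Step 1
  have hA1ξ : ‖A1 ξ‖ ≤ ε * ‖u‖ := by
    have : A1 ξ = ((0 : K), diagE 2 u) := by
      rw [A1_apply, hξ]
    rw [this, norm_pair_zero_left]
    refine norm_le_dom _ u ε hεpos.le (fun m => ?_)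
    rw [norm_diagE_coord]
    by_cases hm : m ∈ F
    · have h1 := hP1 m hm
      have hb : (0:ℝ) < ((m : ℝ) + 1) ^ 2 := by positivity
      rw [div_le_iff₀ hb]
      have h2 : 1 ≤ ε * ((m : ℝ) + 1) ^ 2 := by
        rw [hε]
        rw [inv_mul_eq_div, le_div_iff₀ (by positivity)]
        linarith
      nlinarith [norm_nonneg ((u : ℕ → ℂ) m)]
    · rw [husupp m hm]
      simp
  -- Step 2
  have hB1η : ‖B1 η‖ ≤ c * (ε * ‖u‖) := by
    rw [hη, hBX ξ]
    calc ‖S (A1 ξ)‖ ≤ ‖S‖ * ‖A1 ξ‖ := S.le_opNorm _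
    _ ≤ c * (ε * ‖u‖) := by
        apply mul_le_mul hcS hA1ξ (norm_nonneg _) hc0.le
  -- splitting
  set ηl : MK := ((0 : K), η.2) with hηl
  set ηh : MK := (η.1, (0 : K)) with hηh
  have hηsplit : η = ηh + ηl := by
    rw [hηh, hηl, Prod.mk_add_mk, add_zero, zero_add]
  have hηhle : ‖ηh‖ ≤ ‖B1 η‖ := by
    rw [hηh, norm_pair_zero_right]
    have : η.1 = (B1 η).1 := rfl
    rw [this]
    exact norm_fst_le _
  have hη2le : ‖η.2‖ ≤ c * ‖u‖ := by
    calc ‖η.2‖ ≤ ‖η‖ := norm_snd_le _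
    _ = ‖X ξ‖ := by rw [hη]
    _ ≤ ‖X‖ * ‖ξ‖ := X.le_opNorm _
    _ = ‖X‖ * ‖u‖ := by rw [hξ, norm_pair_zero_left]
    _ ≤ c * ‖u‖ := mul_le_mul_of_nonneg_right hcX (norm_nonneg _)
  have hB1ηl : ‖B1 ηl‖ ≤ (ε * κ) * ‖η.2‖ := by
    have : B1 ηl = ((0 : K), diagE 3 η.2) := by rw [B1_apply, hηl]
    rw [this, norm_pair_zero_left]
    refine norm_le_dom _ η.2 (ε * κ) (by positivity) (fun m => ?_)
    rw [norm_diagE_coord]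
    by_cases hm : m < N
    · rw [hηcoord m hm]
      simp
    · push_neg at hm
      have h3 := hP3 m hm
      have hb : (0:ℝ) < ((m : ℝ) + 1) ^ 3 := by positivity
      rw [div_le_iff₀ hb]
      have h2 : 1 ≤ (ε * κ) * ((m : ℝ) + 1) ^ 3 := by
        rw [hε, hκ, ← mul_inv, ← pow_add]
        rw [inv_mul_eq_div, le_div_iff₀ (by positivity)]
        linarith
      nlinarith [norm_nonneg ((η.2 : ℕ → ℂ) m)]
  -- ζ and bounds
  set ζ : MK := Y ηl with hζ
  have hup : ‖A1 ζ‖ ≤ c * ((ε * κ) * (c * ‖u‖)) := by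
    rw [hζ, hAY ηl]
    calc ‖S' (B1 ηl)‖ ≤ ‖S'‖ * ‖B1 ηl‖ := S'.le_opNorm _
    _ ≤ c * ((ε * κ) * (c * ‖u‖)) := by
        apply mul_le_mul hcS' _ (norm_nonneg _) hc0.le
        calc ‖B1 ηl‖ ≤ (ε * κ) * ‖η.2‖ := hB1ηl
        _ ≤ (ε * κ) * (c * ‖u‖) := by
            apply mul_le_mul_of_nonneg_left hη2le (by positivity)
  have hζξ : ‖ζ - ξ‖ ≤ c * (c * (ε * ‖u‖)) := by
    have hYη : Y η = ξ := by rw [hη, hYX]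
    have : ζ - ξ = Y (ηl - η) := by
      rw [map_sub, hζ, hYη]
    rw [this]
    have h4 : ηl - η = -ηh := by
      rw [hηsplit]; abel
    rw [h4, map_neg, norm_neg]
    calc ‖Y ηh‖ ≤ ‖Y‖ * ‖ηh‖ := Y.le_opNorm _
    _ ≤ c * (c * (ε * ‖u‖)) := by
        apply mul_le_mul hcY _ (norm_nonneg _) hc0.le
        exact le_trans hηhle hB1η
  -- lower bound
  set w : K := ζ.2 with hw
  have hwFmem : Memℓp (fun m : ℕ => if m ∈ F then (w : ℕ → ℂ) m else 0) 2 := by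
    refine memℓp_dom w 1 zero_le_one (fun m => ?_)
    by_cases hm : m ∈ F <;> simp [hm, norm_nonneg]
  set wF : K := mkK _ hwFmem with hwF
  have h1 : ‖wF‖ ≤ (2:ℝ) ^ (n + 1) * ‖diagE 2 w‖ := by
    refine norm_le_dom _ _ _ (by positivity) (fun m => ?_)
    rw [norm_diagE_coord, hwF, mkK_apply]
    by_cases hm : m ∈ F
    · simp only [hm, if_true]
      have h2 := hP2 m hm
      have hb : (0:ℝ) < ((m : ℝ) + 1) ^ 2 := by positivity
      rw [← mul_div_assoc, le_div_iff₀ hb]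
      nlinarith [norm_nonneg ((w : ℕ → ℂ) m)]
    · simp only [hm, if_false, norm_zero]
      positivity
  have h2 : ‖wF - u‖ ≤ ‖ζ - ξ‖ := by
    calc ‖wF - u‖ ≤ 1 * ‖(ζ - ξ).2‖ := by
          refine norm_le_dom _ _ 1 zero_le_one (fun m => ?_)
          have hcoe : ((wF - u : K) : ℕ → ℂ) m = (wF : ℕ → ℂ) m - (u : ℕ → ℂ) m := by
            rw [lp.coeFn_sub]; rfl
          have hcoe2 : (((ζ - ξ).2 : K) : ℕ → ℂ) m = (w : ℕ → ℂ) m - (u : ℕ → ℂ) m := by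
            rw [Prod.snd_sub, lp.coeFn_sub, hw, hξ]; rfl
          rw [hcoe, hcoe2, hwF, mkK_apply, one_mul]
          by_cases hm : m ∈ F
          · simp [hm]
          · rw [husupp m hm]
            simp [hm]
    _ = ‖(ζ - ξ).2‖ := one_mul _
    _ ≤ ‖ζ - ξ‖ := norm_snd_le _
  have h3 : ‖diagE 2 w‖ ≤ ‖A1 ζ‖ := by
    have : diagE 2 w = (A1 ζ).2 := rfl
    rw [this]
    exact norm_snd_le _
  have htri : ‖u‖ ≤ ‖wF‖ + ‖wF - u‖ := by
    have h5 : u = wF - (wF - u) := by abel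
    calc ‖u‖ = ‖wF - (wF - u)‖ := by rw [← h5]
    _ ≤ ‖wF‖ + ‖wF - u‖ := norm_sub_le _ _
  -- final contradiction
  have hpe : (2:ℝ) ^ (n + 1) * ε = 2 := by
    rw [hε, pow_succ]
    field_simp
  have hck : c ^ 2 * κ ≤ 1 / 4 := by
    rw [hκ]
    rw [mul_inv_le_iff₀ (by positivity)]
    linarith
  have hεκ : ε ≤ κ := by
    rw [hε, hκ]
    apply inv_anti₀ (by positivity)
    apply pow_le_pow_right₀ one_le_two
    omega
  have hce2 : c ^ 2 * ε ≤ 1 / 4 := by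
    calc c ^ 2 * ε ≤ c ^ 2 * κ := by
          apply mul_le_mul_of_nonneg_left hεκ (by positivity)
    _ ≤ 1 / 4 := hck
  -- combine
  have hwFle : ‖wF‖ ≤ 2 * c ^ 2 * κ * ‖u‖ := by
    calc ‖wF‖ ≤ (2:ℝ) ^ (n + 1) * ‖diagE 2 w‖ := h1
    _ ≤ (2:ℝ) ^ (n + 1) * (c * ((ε * κ) * (c * ‖u‖))) := by
        apply mul_le_mul_of_nonneg_left (le_trans h3 hup) (by positivity)
    _ = ((2:ℝ) ^ (n + 1) * ε) * (c ^ 2 * κ * ‖u‖) := by ring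
    _ = 2 * c ^ 2 * κ * ‖u‖ := by rw [hpe]; ring
  have hsub : ‖wF - u‖ ≤ c ^ 2 * ε * ‖u‖ := by
    calc ‖wF - u‖ ≤ ‖ζ - ξ‖ := h2
    _ ≤ c * (c * (ε * ‖u‖)) := hζξ
    _ = c ^ 2 * ε * ‖u‖ := by ring
  have : ‖u‖ ≤ (3 / 4) * ‖u‖ := by
    calc ‖u‖ ≤ ‖wF‖ + ‖wF - u‖ := htri
    _ ≤ 2 * c ^ 2 * κ * ‖u‖ + c ^ 2 * ε * ‖u‖ := add_le_add hwFle hsub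
    _ ≤ 2 * (1/4) * ‖u‖ + (1/4) * ‖u‖ := by
        apply add_le_add
        · have : 2 * c ^ 2 * κ ≤ 2 * (1/4) := by linarith
          apply mul_le_mul_of_nonneg_right this (norm_nonneg _)
        · apply mul_le_mul_of_nonneg_right hce2 (norm_nonneg _)
    _ = (3 / 4) * ‖u‖ := by ring
  linarith

lemma key (S S' : MK →L[ℂ] MK)
    (hS'S : ∀ q, S' (S q) = q)
    (hfwd : ∀ q : MK, q.2 ∈ RE 2 → (S q).2 ∈ RE 3)
    (hbwd : ∀ q : MK, q.2 ∈ RE 3 → (S' q).2 ∈ RE 2) : False := by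
  have hXex : ∀ p : MK, ∃ q : MK, B1 q = S (A1 p) := by
    intro p
    have hmem : (A1 p).2 ∈ RE 2 := (mem_RE_iff 2 _).2 ⟨p.2, rfl⟩
    obtain ⟨v, hv⟩ := (mem_RE_iff 3 _).1 (hfwd (A1 p) hmem)
    exact ⟨((S (A1 p)).1, v), Prod.ext rfl hv⟩
  have hYex : ∀ p : MK, ∃ q : MK, A1 q = S' (B1 p) := by
    intro p
    have hmem : (B1 p).2 ∈ RE 3 := (mem_RE_iff 3 _).2 ⟨p.2, rfl⟩
    obtain ⟨v, hv⟩ := (mem_RE_iff 2 _).1 (hbwd (B1 p) hmem)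
    exact ⟨((S' (B1 p)).1, v), Prod.ext rfl hv⟩
  choose Xf hXf using hXex
  choose Yf hYf using hYex
  have hXadd : ∀ p q, Xf (p + q) = Xf p + Xf q := by
    intro p q
    apply B1_inj
    rw [map_add, hXf, hXf, hXf, map_add, map_add]
  have hXsmul : ∀ (c : ℂ) p, Xf (c • p) = c • Xf p := by
    intro cc p
    apply B1_inj
    rw [map_smul, hXf, hXf, map_smul, map_smul]
  have hYadd : ∀ p q, Yf (p + q) = Yf p + Yf q := by
    intro p q
    apply A1_inj
    rw [map_add, hYf, hYf, hYf, map_add, map_add]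
  have hYsmul : ∀ (c : ℂ) p, Yf (c • p) = c • Yf p := by
    intro cc p
    apply A1_inj
    rw [map_smul, hYf, hYf, map_smul, map_smul]
  let Xl : MK →ₗ[ℂ] MK :=
    { toFun := Xf, map_add' := hXadd, map_smul' := hXsmul }
  let Yl : MK →ₗ[ℂ] MK :=
    { toFun := Yf, map_add' := hYadd, map_smul' := hYsmul }
  have hXcont : Continuous Xl := by
    apply Xl.continuous_of_seq_closed_graph
    intro q x y hqx hqy
    have l1 : Filter.Tendsto (fun i => B1 (Xf (q i))) Filter.atTop (nhds (B1 y)) :=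
      (B1.continuous.tendsto y).comp hqy
    have l2 : Filter.Tendsto (fun i => B1 (Xf (q i))) Filter.atTop (nhds (S (A1 x))) := by
      have he : (fun i => B1 (Xf (q i))) = fun i => S (A1 (q i)) := funext fun i => hXf (q i)
      rw [he]
      exact ((S.continuous.comp A1.continuous).tendsto x).comp hqx
    have h3 := tendsto_nhds_unique l1 l2
    apply B1_inj
    rw [h3]
    exact (hXf x).symm
  have hYcont : Continuous Yl := by
    apply Yl.continuous_of_seq_closed_graph
    intro q x y hqx hqy
    have l1 : Filter.Tendsto (fun i => A1 (Yf (q i))) Filter.atTop (nhds (A1 y)) :=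
      (A1.continuous.tendsto y).comp hqy
    have l2 : Filter.Tendsto (fun i => A1 (Yf (q i))) Filter.atTop (nhds (S' (B1 x))) := by
      have he : (fun i => A1 (Yf (q i))) = fun i => S' (B1 (q i)) := funext fun i => hYf (q i)
      rw [he]
      exact ((S'.continuous.comp B1.continuous).tendsto x).comp hqx
    have h3 := tendsto_nhds_unique l1 l2
    apply A1_inj
    rw [h3]
    exact (hYf x).symm
  let X : MK →L[ℂ] MK := ⟨Xl, hXcont⟩
  let Y : MK →L[ℂ] MK := ⟨Yl, hYcont⟩
  have hYX : ∀ p, Y (X p) = p := by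
    intro p
    apply A1_inj
    show A1 (Yf (Xf p)) = A1 p
    rw [hYf, hXf, hS'S]
  exact endgame X Y S S' hXf hYf hYX

lemma mem_sumDiagGraph (a b : ℕ → ℂ) (p : MK × MK) :
    p ∈ (sumDiagGraph a b : Set (MK × MK)) ↔
      (∀ n, (p.2.1 : ℕ → ℂ) n = a n * (p.1.1 : ℕ → ℂ) n) ∧
      (∀ n, (p.2.2 : ℕ → ℂ) n = b n * (p.1.2 : ℕ → ℂ) n) :=
  Iff.rfl

lemma graph_snd (e : ℕ) (q : MK) :
    (∃ p : MK × MK, p ∈ (sumDiagGraph (fun n : ℕ => ((n : ℂ) + 1) ^ e)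
      (fun n : ℕ => 1 / ((n : ℂ) + 1) ^ e) : Set (MK × MK)) ∧ p.2 = q) ↔ q.2 ∈ RE e := by
  constructor
  · rintro ⟨p, hp, rfl⟩
    obtain ⟨h1, h2⟩ := (mem_sumDiagGraph _ _ p).1 hp
    show Memℓp _ 2
    have he : (fun n : ℕ => ((n : ℂ) + 1) ^ e * (p.2.2 : ℕ → ℂ) n)
        = fun n : ℕ => (p.1.2 : ℕ → ℂ) n := by
      funext n
      rw [h2 n]
      rw [one_div, ← mul_assoc, mul_inv_cancel₀ (ce_base_ne e n), one_mul]
    rw [he]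
    exact lp.memℓp p.1.2
  · intro hq
    obtain ⟨u, hu⟩ := (mem_RE_iff e q.2).1 hq
    refine ⟨((diagE e q.1, u), q), ?_, rfl⟩
    rw [mem_sumDiagGraph]
    constructor
    · intro n
      show (q.1 : ℕ → ℂ) n = ((n : ℂ) + 1) ^ e * (diagE e q.1) n
      rw [diagE_apply, mul_div_assoc']
      rw [mul_comm]
      rw [mul_div_cancel_right₀ _ (ce_base_ne e n)]
    · intro n
      show (q.2 : ℕ → ℂ) n = 1 / ((n : ℂ) + 1) ^ e * (u : ℕ → ℂ) n
      rw [← hu, diagE_apply]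
      rw [one_div, inv_mul_eq_div]

theorem squares_and_cubes_sum_graphs_not_boundedly_isomorphic :
    ¬ ∃ V : ((K × K) × (K × K)) ≃L[ℂ] ((K × K) × (K × K)),
        V '' (((⊤ : Submodule ℂ (K × K)).prod (⊥ : Submodule ℂ (K × K))) :
            Set ((K × K) × (K × K))) =
          (((⊤ : Submodule ℂ (K × K)).prod (⊥ : Submodule ℂ (K × K))) :
            Set ((K × K) × (K × K))) ∧
        V '' ((sumDiagGraph (fun n : ℕ => ((n : ℂ) + 1) ^ 2)
            (fun n : ℕ => 1 / ((n : ℂ) + 1) ^ 2)) : Set ((K × K) × (K × K))) =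
          ((sumDiagGraph (fun n : ℕ => ((n : ℂ) + 1) ^ 3)
            (fun n : ℕ => 1 / ((n : ℂ) + 1) ^ 3)) : Set ((K × K) × (K × K))) := by
  rintro ⟨V, hE, hG⟩
  set S : MK →L[ℂ] MK := (ContinuousLinearMap.snd ℂ MK MK).comp
    (((V : (MK × MK) →L[ℂ] (MK × MK))).comp (ContinuousLinearMap.inr ℂ MK MK)) with hS
  set S' : MK →L[ℂ] MK := (ContinuousLinearMap.snd ℂ MK MK).comp
    (((V.symm : (MK × MK) →L[ℂ] (MK × MK))).comp (ContinuousLinearMap.inr ℂ MK MK)) with hS'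
  have hSapp : ∀ q : MK, S q = (V ((0 : MK), q)).2 := fun q => rfl
  have hS'app : ∀ q : MK, S' q = (V.symm ((0 : MK), q)).2 := fun q => rfl
  have hmemE : ∀ p : MK × MK, p ∈ (((⊤ : Submodule ℂ MK).prod (⊥ : Submodule ℂ MK)) :
      Set (MK × MK)) ↔ p.2 = 0 := by
    intro p
    rw [SetLike.mem_coe, Submodule.mem_prod]
    simp [Submodule.mem_bot]
  have hVE : ∀ a : MK, (V ((a, (0 : MK)) : MK × MK)).2 = 0 := by
    intro a
    have h1 : ((a, (0:MK)) : MK × MK) ∈ (((⊤ : Submodule ℂ MK).prod (⊥ : Submodule ℂ MK)) :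
        Set (MK × MK)) := (hmemE _).2 rfl
    have h2 := Set.mem_image_of_mem V h1
    rw [hE] at h2
    exact (hmemE _).1 h2
  have hVsymmE : ∀ a : MK, (V.symm ((a, (0 : MK)) : MK × MK)).2 = 0 := by
    intro a
    have h1 : ((a, (0:MK)) : MK × MK) ∈ (((⊤ : Submodule ℂ MK).prod (⊥ : Submodule ℂ MK)) :
        Set (MK × MK)) := (hmemE _).2 rfl
    rw [← hE] at h1
    obtain ⟨p, hp, hpa⟩ := h1
    have : V.symm ((a, (0:MK)) : MK × MK) = p := by
      rw [← hpa, ContinuousLinearEquiv.symm_apply_apply]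
    rw [this]
    exact (hmemE _).1 hp
  have hVsnd : ∀ p : MK × MK, (V p).2 = S p.2 := by
    intro p
    have hdec : p = ((p.1, (0:MK)) : MK × MK) + (((0:MK), p.2) : MK × MK) := by
      rw [Prod.mk_add_mk, add_zero, zero_add]
    calc (V p).2 = (V ((p.1, (0:MK)) + (((0:MK), p.2) : MK × MK))).2 := by rw [← hdec]
    _ = (V (p.1, (0:MK))).2 + (V ((0:MK), p.2)).2 := by rw [map_add, Prod.snd_add]
    _ = S p.2 := by rw [hVE, zero_add, hSapp]
  have hVsymmsnd : ∀ p : MK × MK, (V.symm p).2 = S' p.2 := by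
    intro p
    have hdec : p = ((p.1, (0:MK)) : MK × MK) + (((0:MK), p.2) : MK × MK) := by
      rw [Prod.mk_add_mk, add_zero, zero_add]
    calc (V.symm p).2 = (V.symm ((p.1, (0:MK)) + (((0:MK), p.2) : MK × MK))).2 := by
          rw [← hdec]
    _ = (V.symm (p.1, (0:MK))).2 + (V.symm ((0:MK), p.2)).2 := by rw [map_add, Prod.snd_add]
    _ = S' p.2 := by rw [hVsymmE, zero_add, hS'app]
  have hS'S : ∀ q : MK, S' (S q) = q := by
    intro q
    have h1 : V.symm (V (((0:MK), q) : MK × MK)) = ((0:MK), q) :=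
      ContinuousLinearEquiv.symm_apply_apply _ _
    calc S' (S q) = S' ((V (((0:MK), q) : MK × MK)).2) := by rw [hSapp]
    _ = (V.symm (V (((0:MK), q) : MK × MK))).2 := (hVsymmsnd _).symm
    _ = q := by rw [h1]
  have hfwd : ∀ q : MK, q.2 ∈ RE 2 → (S q).2 ∈ RE 3 := by
    intro q hq
    obtain ⟨p, hpG, hp2⟩ := (graph_snd 2 q).2 hq
    have h2 := Set.mem_image_of_mem V hpG
    rw [hG] at h2
    refine (graph_snd 3 (S q)).1 ⟨V p, h2, ?_⟩
    rw [hVsnd, hp2]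
  have hbwd : ∀ q : MK, q.2 ∈ RE 3 → (S' q).2 ∈ RE 2 := by
    intro q hq
    obtain ⟨p', hp'G, hp'2⟩ := (graph_snd 3 q).2 hq
    rw [← hG] at hp'G
    obtain ⟨p, hpG2, hVp⟩ := hp'G
    have hsymm : V.symm p' = p := by rw [← hVp, ContinuousLinearEquiv.symm_apply_apply]
    have hS'q : S' q = p.2 := by
      rw [← hp'2, ← hVsymmsnd, hsymm]
    rw [hS'q]
    exact (graph_snd 2 p.2).1 ⟨p, hpG2, rfl⟩
  exact key S S' hS'S hfwd hbwd

end
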